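/- Four-points property: Let d_ψ be a Bregman divergence that is jointly convex in both arguments on A × B. For p ∈ A, let q* = argmin_{q∈B} d_ψ(p, q). Then for all u ∈ A and v ∈ B: δ_ψ(u, p) + d_ψ(u, v) ≥ d_ψ(u, q*), where δ_ψ(u,p) = ψ(u) − ψ(p) − ⟨∇ψ(p), u − p⟩. -/

import Mathlib

open scoped RealInnerProductSpace BigOperators

/-- The Bregman divergence associated to a convex function `ψ` with gradient map `g`.
Note that `δ_ψ(u, p) = bregman ψ g u p`. -/
noncomputable def bregman {k : ℕ} (ψ : EuclideanSpace ℝ (Fin k) → ℝ)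
    (g : EuclideanSpace ℝ (Fin k) → EuclideanSpace ℝ (Fin k))
    (p q : EuclideanSpace ℝ (Fin k)) : ℝ :=
  ψ p - ψ q - ⟪p - q, g q⟫

variable {k : ℕ}

private lemma line_hasDerivAt (ψ : EuclideanSpace ℝ (Fin k) → ℝ)
    {y gy : EuclideanSpace ℝ (Fin k)} (hgy : HasGradientAt ψ gy y)
    (w : EuclideanSpace ℝ (Fin k)) :
    HasDerivAt (fun t : ℝ => ψ (y + t • w)) ⟪w, gy⟫ 0 := by
  have hc : HasDerivAt (fun t : ℝ => y + t • w) w 0 := by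
    simpa using ((hasDerivAt_id (0:ℝ)).smul_const w).const_add y
  have h2 : HasFDerivAt ψ ((InnerProductSpace.toDual ℝ (EuclideanSpace ℝ (Fin k))) gy) (y + (0:ℝ) • w) := by simpa using hgy.hasFDerivAt
  have := h2.comp_hasDerivAt 0 hc
  rw [real_inner_comm]; simpa [InnerProductSpace.toDual_apply_apply, Function.comp_def] using this

private lemma grad_ineq {ψ : EuclideanSpace ℝ (Fin k) → ℝ}
    (hψ : ConvexOn ℝ Set.univ ψ) {y gy : EuclideanSpace ℝ (Fin k)}
    (hgy : HasGradientAt ψ gy y) (x : EuclideanSpace ℝ (Fin k)) :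
    ψ y + ⟪x - y, gy⟫ ≤ ψ x := by
  set f : ℝ → ℝ := fun t => ψ (y + t • (x - y)) with hf
  have hD : HasDerivAt f ⟪x - y, gy⟫ 0 := line_hasDerivAt ψ hgy (x - y)
  have hf0 : f 0 = ψ y := by simp [hf]
  have key : ∀ t : ℝ, t ∈ Set.Ioc (0:ℝ) 1 → slope f 0 t ≤ ψ x - ψ y := by
    intro t ht
    have hcomb := hψ.2 (Set.mem_univ y) (Set.mem_univ x)
      (by obtain ⟨h1, h2⟩ := ht; linarith : (0:ℝ) ≤ 1 - t) (le_of_lt ht.1) (by ring)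
    have heq : y + t • (x - y) = (1 - t) • y + t • x := by module
    have hft : f t ≤ (1 - t) * ψ y + t * ψ x := by
      rw [hf]; simp only []; rw [heq]; simpa using hcomb
    rw [slope_def_field, hf0, div_le_iff₀ (by linarith [ht.1] : (0:ℝ) < t - 0)]
    nlinarith [ht.1, ht.2]
  have hT : Filter.Tendsto (slope f 0) (nhdsWithin 0 (Set.Ioi 0)) (nhds ⟪x - y, gy⟫) :=
    (hasDerivAt_iff_tendsto_slope.1 hD).mono_left
      (nhdsWithin_mono _ fun t ht => ne_of_gt ht)
  have hmem : Set.Ioc (0:ℝ) 1 ∈ nhdsWithin (0:ℝ) (Set.Ioi 0) :=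
    Ioc_mem_nhdsGT_of_mem (by norm_num)
  have := le_of_tendsto hT (Filter.eventually_of_mem hmem key)
  linarith

private lemma deriv_ge {ψ : EuclideanSpace ℝ (Fin k) → ℝ}
    {y gy : EuclideanSpace ℝ (Fin k)} (hgy : HasGradientAt ψ gy y)
    (w : EuclideanSpace ℝ (Fin k)) (c : ℝ)
    (h : ∀ s : ℝ, s ∈ Set.Ioc (0:ℝ) 1 → ψ y + s * c ≤ ψ (y + s • w)) :
    c ≤ ⟪w, gy⟫ := by
  set f : ℝ → ℝ := fun t => ψ (y + t • w) with hf
  have hD : HasDerivAt f ⟪w, gy⟫ 0 := line_hasDerivAt ψ hgy w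
  have hf0 : f 0 = ψ y := by simp [hf]
  have key : ∀ t : ℝ, t ∈ Set.Ioc (0:ℝ) 1 → c ≤ slope f 0 t := by
    intro t ht
    have := h t ht
    rw [slope_def_field, hf0, le_div_iff₀ (by linarith [ht.1] : (0:ℝ) < t - 0)]
    nlinarith [ht.1]
  have hT : Filter.Tendsto (slope f 0) (nhdsWithin 0 (Set.Ioi 0)) (nhds ⟪w, gy⟫) :=
    (hasDerivAt_iff_tendsto_slope.1 hD).mono_left
      (nhdsWithin_mono _ fun t ht => ne_of_gt ht)
  have hmem : Set.Ioc (0:ℝ) 1 ∈ nhdsWithin (0:ℝ) (Set.Ioi 0) :=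
    Ioc_mem_nhdsGT_of_mem (by norm_num)
  exact ge_of_tendsto hT (Filter.eventually_of_mem hmem key)

private lemma grad_norm_bound {ψ : EuclideanSpace ℝ (Fin k) → ℝ}
    {gψ : EuclideanSpace ℝ (Fin k) → EuclideanSpace ℝ (Fin k)}
    (hψ : ConvexOn ℝ Set.univ ψ) (hg : ∀ x, HasGradientAt ψ (gψ x) x)
    (q0 : EuclideanSpace ℝ (Fin k)) :
    ∃ M : ℝ, ∀ q ∈ Metric.closedBall q0 1, ‖gψ q‖ ≤ M := by
  have hcont : Continuous ψ := by
    have : Differentiable ℝ ψ := fun x => (hg x).hasFDerivAt.differentiableAt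
    exact this.continuous
  obtain ⟨zmax, hzmaxmem, hzmax⟩ := (isCompact_closedBall q0 2).exists_isMaxOn
    ⟨q0, by simp⟩ hcont.continuousOn
  obtain ⟨zmin, hzminmem, hzmin⟩ := (isCompact_closedBall q0 2).exists_isMinOn
    ⟨q0, by simp⟩ hcont.continuousOn
  refine ⟨ψ zmax - ψ zmin, fun q hq => ?_⟩
  have hq2 : q ∈ Metric.closedBall q0 2 := by
    simp only [Metric.mem_closedBall] at *; linarith
  have hmax : ∀ x ∈ Metric.closedBall q0 2, ψ x ≤ ψ zmax := fun x hx => hzmax hx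
  have hmin' : ∀ x ∈ Metric.closedBall q0 2, ψ zmin ≤ ψ x := fun x hx => hzmin hx
  by_cases hz : gψ q = 0
  · simp only [hz, norm_zero]
    linarith [hmax zmin hzminmem]
  · set e : EuclideanSpace ℝ (Fin k) := ‖gψ q‖⁻¹ • gψ q with he
    have hne : ‖e‖ = 1 := by
      rw [he, norm_smul, norm_inv, norm_norm, inv_mul_cancel₀ (norm_ne_zero_iff.2 hz)]
    have hqe : q + e ∈ Metric.closedBall q0 2 := by
      simp only [Metric.mem_closedBall] at *
      calc dist (q + e) q0 ≤ dist (q + e) q + dist q q0 := dist_triangle _ _ _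
        _ ≤ 1 + 1 := by
            rw [dist_eq_norm]
            simp only [add_sub_cancel_left, hne]
            exact add_le_add le_rfl hq
        _ = 2 := by norm_num
    have hgi := grad_ineq hψ (hg q) (q + e)
    have hinner : (⟪q + e - q, gψ q⟫ : ℝ) = ‖gψ q‖ := by
      have h0 : ‖gψ q‖ ≠ 0 := norm_ne_zero_iff.2 hz
      rw [add_sub_cancel_left, he, real_inner_smul_left, real_inner_self_eq_norm_sq]
      field_simp
    rw [hinner] at hgi
    linarith [hmax (q + e) hqe, hmin' q hq2]

private lemma step_A {A B : Set (EuclideanSpace ℝ (Fin k))}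
    (hA : Convex ℝ A) (hB : Convex ℝ B)
    {ψ : EuclideanSpace ℝ (Fin k) → ℝ}
    {gψ : EuclideanSpace ℝ (Fin k) → EuclideanSpace ℝ (Fin k)}
    (hψc : ConvexOn ℝ Set.univ ψ)
    (hg : ∀ x, HasGradientAt ψ (gψ x) x)
    (hjc : ConvexOn ℝ (A ×ˢ B) fun z :
        EuclideanSpace ℝ (Fin k) × EuclideanSpace ℝ (Fin k) => bregman ψ gψ z.1 z.2)
    {p u qstar v : EuclideanSpace ℝ (Fin k)}
    (hp : p ∈ A) (hu : u ∈ A) (hq : qstar ∈ B) (hv : v ∈ B)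
    (hmin : ∀ q ∈ B, bregman ψ gψ p qstar ≤ bregman ψ gψ p q)
    {t : ℝ} (ht : t ∈ Set.Ioc (0:ℝ) 1) :
    bregman ψ gψ u qstar ≤ bregman ψ gψ u p + bregman ψ gψ u v
      + ⟪u - qstar, gψ ((1-t) • qstar + t • v) - gψ qstar⟫ := by
  obtain ⟨ht0, ht1⟩ := ht
  set pt : EuclideanSpace ℝ (Fin k) := (1-t) • p + t • u with hpt
  set qt : EuclideanSpace ℝ (Fin k) := (1-t) • qstar + t • v with hqt
  have hqtB : qt ∈ B := hB hq hv (by linarith) ht0.le (by ring)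
  have hjoint : bregman ψ gψ pt qt
      ≤ (1-t) * bregman ψ gψ p qstar + t * bregman ψ gψ u v := by
    have := hjc.2 (Set.mk_mem_prod hp hq) (Set.mk_mem_prod hu hv)
      (by linarith : (0:ℝ) ≤ 1 - t) ht0.le (by ring)
    simpa [Prod.smul_mk, Prod.mk_add_mk] using this
  have fact1 : bregman ψ gψ pt qt = (1-t) * bregman ψ gψ p qt
      + t * bregman ψ gψ u qt - ((1-t) * ψ p + t * ψ u - ψ pt) := by
    have hvid : pt - qt = (1-t) • (p - qt) + t • (u - qt) := by
      rw [hpt, hqt]; module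
    simp only [bregman]
    rw [hvid, inner_add_left, real_inner_smul_left, real_inner_smul_left]
    ring
  have hmin' := hmin qt hqtB
  have jensen : (1-t) * ψ p + t * ψ u - ψ pt ≤ t * bregman ψ gψ u p := by
    have hgi := grad_ineq hψc (hg p) pt
    have h2 : (⟪pt - p, gψ p⟫ : ℝ) = t * ⟪u - p, gψ p⟫ := by
      rw [← real_inner_smul_left]; congr 1; rw [hpt]; module
    rw [h2] at hgi
    simp only [bregman]
    nlinarith
  have fact2 : bregman ψ gψ u qstar ≤ bregman ψ gψ u qt
      + ⟪u - qstar, gψ qt - gψ qstar⟫ := by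
    have hgi := grad_ineq hψc (hg qt) qstar
    have hsplit : (⟪u - qt, gψ qt⟫ : ℝ)
        = ⟪u - qstar, gψ qt⟫ + ⟪qstar - qt, gψ qt⟫ := by
      rw [← inner_add_left]; congr 1; module
    simp only [bregman, inner_sub_right]
    linarith [hgi, hsplit]
  have h1 : t * bregman ψ gψ u qt ≤ t * (bregman ψ gψ u v + bregman ψ gψ u p) := by
    nlinarith [mul_le_mul_of_nonneg_left hmin' (show (0:ℝ) ≤ 1 - t by linarith)]
  have hDuqt : bregman ψ gψ u qt ≤ bregman ψ gψ u v + bregman ψ gψ u p :=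
    le_of_mul_le_mul_left h1 ht0
  linarith [fact2, hDuqt]

/-- the four-points property.  If the Bregman divergence `d_ψ` is jointly
convex on `A × B` and `q*` minimizes `q ↦ d_ψ(p, q)` over the closed convex set `B`
(so `⟪∇_q d_ψ(p, q*), v − q*⟫ ≥ 0` for all `v ∈ B`), then for all `u ∈ A`, `v ∈ B`:
`δ_ψ(u, p) + d_ψ(u, v) ≥ d_ψ(u, q*)`. -/
theorem four_points_property {k : ℕ}
    (A B : Set (EuclideanSpace ℝ (Fin k)))
    (hA : Convex ℝ A) (hB : Convex ℝ B)
    (hAc : IsClosed A) (hBc : IsClosed B)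
    (ψ : EuclideanSpace ℝ (Fin k) → ℝ)
    (gψ : EuclideanSpace ℝ (Fin k) → EuclideanSpace ℝ (Fin k))
    (hψ : StrictConvexOn ℝ Set.univ ψ)
    (hg : ∀ x, HasGradientAt ψ (gψ x) x)
    (hjc : ConvexOn ℝ (A ×ˢ B) fun z :
        EuclideanSpace ℝ (Fin k) × EuclideanSpace ℝ (Fin k) => bregman ψ gψ z.1 z.2)
    (p : EuclideanSpace ℝ (Fin k)) (hp : p ∈ A)
    (qstar : EuclideanSpace ℝ (Fin k)) (hq : qstar ∈ B)
    (hmin : ∀ q ∈ B, bregman ψ gψ p qstar ≤ bregman ψ gψ p q)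
    (gq : EuclideanSpace ℝ (Fin k))
    (hgq : HasGradientAt (fun q => bregman ψ gψ p q) gq qstar)
    (hopt : ∀ v ∈ B, 0 ≤ ⟪gq, v - qstar⟫) :
    ∀ u ∈ A, ∀ v ∈ B,
      bregman ψ gψ u p + bregman ψ gψ u v ≥ bregman ψ gψ u qstar := by
  intro u hu v hv
  have hψc : ConvexOn ℝ Set.univ ψ := hψ.convexOn
  have hcontψ : Continuous ψ := by
    have hd : Differentiable ℝ ψ := fun x => (hg x).hasFDerivAt.differentiableAt
    exact hd.continuous
  obtain ⟨M, hM⟩ := grad_norm_bound hψc hg qstar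
  -- the sequence of step sizes
  set c : ℝ := ‖v - qstar‖ + 1 with hc
  have hc0 : 0 < c := by positivity
  set T : ℕ → ℝ := fun n => (1 / (n + 1)) * (1 / c) with hT
  have hTmem : ∀ n, T n ∈ Set.Ioc (0:ℝ) 1 := by
    intro n
    constructor
    · positivity
    · have h1 : (1:ℝ) / (n + 1) ≤ 1 := by
        rw [div_le_one (by positivity)]
        exact le_add_of_nonneg_left (Nat.cast_nonneg n)
      have h2 : (1:ℝ) / c ≤ 1 := by
        rw [div_le_one hc0]; rw [hc]; linarith [norm_nonneg (v - qstar)]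
      calc T n ≤ 1 * 1 := by
            apply mul_le_mul h1 h2 (by positivity) zero_le_one
        _ = 1 := by norm_num
  have hT0 : Filter.Tendsto T Filter.atTop (nhds 0) := by
    rw [hT]
    have := tendsto_one_div_add_atTop_nhds_zero_nat (𝕜 := ℝ)
    simpa using this.mul_const (1 / c)
  set qn : ℕ → EuclideanSpace ℝ (Fin k) := fun n => (1 - T n) • qstar + T n • v with hqn
  have hqnball : ∀ n, qn n ∈ Metric.closedBall qstar 1 := by
    intro n
    rw [Metric.mem_closedBall, dist_eq_norm]
    have hid : qn n - qstar = T n • (v - qstar) := by rw [hqn]; module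
    rw [hid, norm_smul, Real.norm_eq_abs, abs_of_pos (hTmem n).1]
    have h1 : T n ≤ 1 / c := by
      rw [hT]
      have h1 : (1:ℝ) / (n + 1) ≤ 1 := by
        rw [div_le_one (by positivity)]
        exact le_add_of_nonneg_left (Nat.cast_nonneg n)
      calc (1 / (n + 1 : ℝ)) * (1 / c) ≤ 1 * (1 / c) :=
            mul_le_mul_of_nonneg_right h1 (by positivity)
        _ = 1 / c := one_mul _
    calc T n * ‖v - qstar‖ ≤ (1 / c) * ‖v - qstar‖ :=
          mul_le_mul_of_nonneg_right h1 (norm_nonneg _)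
      _ ≤ 1 := by
          rw [div_mul_eq_mul_div, div_le_one hc0, hc]; linarith
  have hqnlim : Filter.Tendsto qn Filter.atTop (nhds qstar) := by
    have : Filter.Tendsto (fun n => qstar + T n • (v - qstar)) Filter.atTop
        (nhds (qstar + (0:ℝ) • (v - qstar))) :=
      Filter.Tendsto.const_add _ ((hT0.smul_const (v - qstar)))
    simp only [zero_smul, add_zero] at this
    convert this using 2 with n
    rw [hqn]; module
  have hgmem : ∀ n, gψ (qn n) ∈ Metric.closedBall (0 : EuclideanSpace ℝ (Fin k)) M := by
    intro n
    rw [Metric.mem_closedBall, dist_zero_right]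
    exact hM _ (hqnball n)
  obtain ⟨z, -, φ, hφ, hz⟩ :=
    (isCompact_closedBall (0 : EuclideanSpace ℝ (Fin k)) M).tendsto_subseq hgmem
  have hqφ : Filter.Tendsto (fun n => qn (φ n)) Filter.atTop (nhds qstar) :=
    hqnlim.comp hφ.tendsto_atTop
  -- z is a subgradient of ψ at qstar
  have hsub : ∀ x, ψ qstar + ⟪x - qstar, z⟫ ≤ ψ x := by
    intro x
    have hn : ∀ n, ψ (qn (φ n)) + ⟪x - qn (φ n), gψ (qn (φ n))⟫ ≤ ψ x :=
      fun n => grad_ineq hψc (hg _) x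
    have hlim : Filter.Tendsto
        (fun n => ψ (qn (φ n)) + ⟪x - qn (φ n), gψ (qn (φ n))⟫)
        Filter.atTop (nhds (ψ qstar + ⟪x - qstar, z⟫)) :=
      ((hcontψ.continuousAt.tendsto.comp hqφ).add
        (Filter.Tendsto.inner (tendsto_const_nhds.sub hqφ) hz))
    exact le_of_tendsto hlim (Filter.Eventually.of_forall hn)
  have hzc : (⟪u - qstar, z⟫ : ℝ) ≤ ⟪u - qstar, gψ qstar⟫ := by
    apply deriv_ge (hg qstar) (u - qstar)
    intro s hs
    have := hsub (qstar + s • (u - qstar))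
    rw [add_sub_cancel_left, real_inner_smul_left] at this
    exact this
  -- the four-points inequality with error term, along the subsequence
  have key : ∀ n, bregman ψ gψ u qstar ≤ bregman ψ gψ u p + bregman ψ gψ u v
      + ⟪u - qstar, gψ (qn (φ n)) - gψ qstar⟫ := by
    intro n
    have := step_A hA hB hψc hg hjc hp hu hq hv hmin (hTmem (φ n))
    simpa [hqn] using this
  have herr : Filter.Tendsto
      (fun n => bregman ψ gψ u p + bregman ψ gψ u v
        + ⟪u - qstar, gψ (qn (φ n)) - gψ qstar⟫)
      Filter.atTop
      (nhds (bregman ψ gψ u p + bregman ψ gψ u v + ⟪u - qstar, z - gψ qstar⟫)) :=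
    tendsto_const_nhds.add (Filter.Tendsto.inner tendsto_const_nhds
      (hz.sub tendsto_const_nhds))
  have hfinal : bregman ψ gψ u qstar ≤ bregman ψ gψ u p + bregman ψ gψ u v
      + ⟪u - qstar, z - gψ qstar⟫ :=
    ge_of_tendsto herr (Filter.Eventually.of_forall key)
  have : (⟪u - qstar, z - gψ qstar⟫ : ℝ) ≤ 0 := by
    rw [inner_sub_right]; linarith
  linarith
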